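/- Let G be a finite group, H and K subgroups, and suppose the complex permutation representations ℂ[H\G] and ℂ[K\G] are isomorphic as representations of G. Then for any complex G-representation V, the subspaces V^H of H-fixed vectors and V^K of K-fixed vectors have equal dimension. -/

import Mathlib

/-- The right coset space H\G. -/
def RightCosets {G : Type*} [Group G] (H : Subgroup G) :=
  Quotient (QuotientGroup.rightRel H)

/-- G acts on the right coset space H\G by `g • Hx = Hxg⁻¹`. -/
instance {G : Type*} [Group G] (H : Subgroup G) : MulAction G (RightCosets H) where
  smul g := Quotient.map' (fun x => x * g⁻¹) (by
    intro a b hab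
    rw [QuotientGroup.rightRel_apply] at hab ⊢
    simpa [mul_assoc] using hab)
  one_smul := by
    rintro ⟨x⟩
    exact Quotient.sound' (by rw [QuotientGroup.rightRel_apply]; group; exact H.one_mem)
  mul_smul := by
    rintro g g' ⟨x⟩
    exact Quotient.sound' (by rw [QuotientGroup.rightRel_apply]; group; exact H.one_mem)

/-- The submodule of H-fixed vectors of a representation. -/
def fixedSubmodule {k G V : Type*} [CommRing k] [Group G] [AddCommGroup V] [Module k V]
    (ρ : Representation k G V) (H : Subgroup G) : Submodule k V where
  carrier := {v | ∀ h ∈ H, ρ h v = v}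
  add_mem' := fun {a b} ha hb h hh => by simp [map_add, ha h hh, hb h hh]
  zero_mem' := fun h hh => map_zero _
  smul_mem' := fun c v hv h hh => by simp [map_smul, hv h hh]

/-- The class of `x` in `H\G`. -/
def RightCosets.mk {G : Type*} [Group G] (H : Subgroup G) (x : G) : RightCosets H :=
  Quotient.mk'' x

lemma RightCosets.smul_mk {G : Type*} [Group G] (H : Subgroup G) (g x : G) :
    g • RightCosets.mk H x = RightCosets.mk H (x * g⁻¹) := rfl

lemma RightCosets.mk_eq {G : Type*} [Group G] (H : Subgroup G) {x y : G}
    (h : y * x⁻¹ ∈ H) : RightCosets.mk H x = RightCosets.mk H y :=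
  Quotient.sound' (by rw [QuotientGroup.rightRel_apply]; exact h)

/-- The submodule of G-equivariant linear maps between two representations. -/
def equivariantHoms {k G V W : Type*} [CommRing k] [Group G]
    [AddCommGroup V] [Module k V] [AddCommGroup W] [Module k W]
    (ρ : Representation k G V) (σ : Representation k G W) : Submodule k (V →ₗ[k] W) where
  carrier := {f | ∀ g v, f (ρ g v) = σ g (f v)}
  add_mem' := fun {a b} ha hb g v => by simp [ha g v, hb g v]
  zero_mem' := fun g v => by simp
  smul_mem' := fun c f hf g v => by simp [hf g v]

/-- The permutation representation on `H\G`, on finitely supported functions. -/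
noncomputable def permRep {G : Type*} [Group G] (H : Subgroup G) :
    Representation ℂ G (RightCosets H →₀ ℂ) where
  toFun g := Finsupp.lmapDomain ℂ ℂ (g • ·)
  map_one' := by ext; simp
  map_mul' x y := by ext; simp [mul_smul]

lemma permRep_single {G : Type*} [Group G] (H : Subgroup G) (g : G) (x : RightCosets H)
    (c : ℂ) : permRep H g (Finsupp.single x c) = Finsupp.single (g • x) c := by
  simp [permRep]

lemma permRep_eq {G : Type*} [Group G] (H : Subgroup G) (g : G) (x : RightCosets H →₀ ℂ) :
    MonoidAlgebra.coeffLinearEquiv ℂ (Representation.ofMulAction ℂ G (RightCosets H) g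
      ((MonoidAlgebra.coeffLinearEquiv ℂ).symm x)) = permRep H g x := by
  simp [permRep, Representation.ofMulAction_def]

section Frobenius

variable {G V : Type*} [Group G] [AddCommGroup V] [Module ℂ V]
  (ρ : Representation ℂ G V) (H : Subgroup G)

/-- Given an H-fixed vector, the corresponding equivariant map `ℂ[H\G] → V`. -/
noncomputable def hmap (v : fixedSubmodule ρ H) : (RightCosets H →₀ ℂ) →ₗ[ℂ] V :=
  Finsupp.linearCombination ℂ (Quotient.lift (fun x : G => ρ x⁻¹ v.1) (by
    intro a b hab
    have hab' : b * a⁻¹ ∈ H := QuotientGroup.rightRel_apply.mp hab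
    have hb : b = (b * a⁻¹) * a := by group
    rw [hb, mul_inv_rev, map_mul]
    simp only [Module.End.mul_apply]
    rw [v.2 _ (inv_mem hab')]))

lemma hmap_single (v : fixedSubmodule ρ H) (x : G) (c : ℂ) :
    hmap ρ H v (Finsupp.single (RightCosets.mk H x) c) = c • ρ x⁻¹ v.1 := by
  exact Finsupp.linearCombination_single _ _ _

lemma hmap_equivariant (v : fixedSubmodule ρ H) (g : G)
    (w : RightCosets H →₀ ℂ) :
    hmap ρ H v (permRep H g w) = ρ g (hmap ρ H v w) := by
  have key : (hmap ρ H v) ∘ₗ (permRep H g)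
      = (ρ g : V →ₗ[ℂ] V) ∘ₗ (hmap ρ H v) := by
    apply Finsupp.lhom_ext
    intro a b
    induction a using Quotient.inductionOn' with
    | h x =>
      have hx : (Quotient.mk'' x : RightCosets H) = RightCosets.mk H x := rfl
      simp only [LinearMap.comp_apply, permRep_single, hx,
        RightCosets.smul_mk, hmap_single]
      rw [map_smul]
      congr 1
      rw [mul_inv_rev, inv_inv, map_mul]
      rfl
  exact congrArg (fun f => f w) key

/-- Frobenius reciprocity: `Hom_G(ℂ[H\G], V) ≃ V^H`. -/
noncomputable def frobeniusFixed :
    equivariantHoms (permRep H) ρ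
      ≃ₗ[ℂ] fixedSubmodule ρ H where
  toFun f := ⟨f.1 (Finsupp.single (RightCosets.mk H 1) 1), by
    have hf : ∀ (g : G) (w : RightCosets H →₀ ℂ),
        f.1 (permRep H g w) = ρ g (f.1 w) := f.2
    intro h hh
    rw [← hf h (Finsupp.single (RightCosets.mk H 1) 1)]
    congr 1
    rw [permRep_single]
    show Finsupp.single (h • RightCosets.mk H 1) 1 = _
    rw [RightCosets.smul_mk]
    congr 1
    exact RightCosets.mk_eq H (by simpa using hh)⟩
  map_add' f g := rfl
  map_smul' c f := rfl
  invFun v := ⟨hmap ρ H v, hmap_equivariant ρ H v⟩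
  left_inv f := by
    have hf : ∀ (g : G) (w : RightCosets H →₀ ℂ),
        f.1 (permRep H g w) = ρ g (f.1 w) := f.2
    apply Subtype.ext
    apply Finsupp.lhom_ext
    intro a b
    induction a using Quotient.inductionOn' with
    | h x =>
      have hx : (Quotient.mk'' x : RightCosets H) = RightCosets.mk H x := rfl
      rw [hx, hmap_single]
      have h1 : Finsupp.single (RightCosets.mk H x) b
          = permRep H x⁻¹
              (Finsupp.single (RightCosets.mk H 1) b) := by
        rw [permRep_single]
        show _ = Finsupp.single (x⁻¹ • RightCosets.mk H 1) b
        rw [RightCosets.smul_mk]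
        simp
      have h2 : Finsupp.single (RightCosets.mk H 1) b
          = b • Finsupp.single (RightCosets.mk H 1) (1 : ℂ) := by simp
      rw [h1, hf x⁻¹, h2, map_smul, map_smul]
  right_inv v := by
    apply Subtype.ext
    show hmap ρ H v (Finsupp.single (RightCosets.mk H 1) 1) = v.1
    rw [hmap_single]
    simp

end Frobenius

theorem finrank_fixed_eq_of_permRep_iso
    {G : Type*} [Group G] [Finite G] (H K : Subgroup G)
    (e : (RightCosets H →₀ ℂ) ≃ₗ[ℂ] (RightCosets K →₀ ℂ))
    (he : ∀ (g : G) (x : RightCosets H →₀ ℂ),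
      e (MonoidAlgebra.coeffLinearEquiv ℂ (Representation.ofMulAction ℂ G (RightCosets H) g
          ((MonoidAlgebra.coeffLinearEquiv ℂ).symm x)))
        = MonoidAlgebra.coeffLinearEquiv ℂ (Representation.ofMulAction ℂ G (RightCosets K) g
          ((MonoidAlgebra.coeffLinearEquiv ℂ).symm (e x))))
    {V : Type*} [AddCommGroup V] [Module ℂ V] [FiniteDimensional ℂ V]
    (ρ : Representation ℂ G V) :
    Module.finrank ℂ (fixedSubmodule ρ H) = Module.finrank ℂ (fixedSubmodule ρ K) := by
  replace he : ∀ (g : G) (x : RightCosets H →₀ ℂ),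
      e (permRep H g x) = permRep K g (e x) := by
    intro g x
    rw [← permRep_eq, ← permRep_eq]
    exact he g x
  have hsymm : ∀ (g : G) (x : RightCosets K →₀ ℂ),
      e.symm (permRep K g x)
        = permRep H g (e.symm x) := by
    intro g x
    apply e.injective
    rw [e.apply_symm_apply, he, e.apply_symm_apply]
  have transport : equivariantHoms (permRep H) ρ
      ≃ₗ[ℂ] equivariantHoms (permRep K) ρ :=
    { toFun := fun f => ⟨f.1 ∘ₗ e.symm.toLinearMap, fun g w => by
        have hf : ∀ (g : G) (w : RightCosets H →₀ ℂ),
            f.1 (permRep H g w) = ρ g (f.1 w) := f.2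
        simp only [LinearMap.comp_apply, LinearEquiv.coe_coe, hsymm, hf]⟩
      map_add' := fun f g => rfl
      map_smul' := fun c f => rfl
      invFun := fun f => ⟨f.1 ∘ₗ e.toLinearMap, fun g w => by
        have hf : ∀ (g : G) (w : RightCosets K →₀ ℂ),
            f.1 (permRep K g w) = ρ g (f.1 w) := f.2
        simp only [LinearMap.comp_apply, LinearEquiv.coe_coe, he, hf]⟩
      left_inv := fun f => Subtype.ext (LinearMap.ext fun w => by simp)
      right_inv := fun f => Subtype.ext (LinearMap.ext fun w => by simp) }
  calc Module.finrank ℂ (fixedSubmodule ρ H)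
      = Module.finrank ℂ (equivariantHoms (permRep H) ρ) :=
        (frobeniusFixed ρ H).symm.finrank_eq
    _ = Module.finrank ℂ (equivariantHoms (permRep K) ρ) :=
        transport.finrank_eq
    _ = Module.finrank ℂ (fixedSubmodule ρ K) := (frobeniusFixed ρ K).finrank_eq
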